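/- Let Λ be a Hermitian operator on a bipartite space with Λ^Γ = Λ and Tr|Λ| ≤ 1, and let H be Hermitian with H + H^Γ = Λ and Tr|H| + Tr|H^Γ| ≤ 1. Define H' = H⊗H⊗H + H^Γ⊗H⊗H + H⊗H^Γ⊗H + H⊗H⊗H^Γ on the triple tensor power. Then H' + H'^Γ = Λ^{⊗3}, Tr|H'| ≤ f(Tr|H|), Tr|H'^Γ| ≤ f(Tr|H^Γ|), and Tr|H'| + Tr|H'^Γ| ≤ 1, where f(x) = x²(3 − 2x). -/

import Mathlib

open Matrix Kronecker ComplexOrder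

/-- Partial transposition on the second tensor factor. -/
def ptrans {a b : Type*} (M : Matrix (a × b) (a × b) ℂ) : Matrix (a × b) (a × b) ℂ :=
  fun p q => M (p.1, q.2) (q.1, p.2)

/-- Partial transposition of all three B factors on the tripled bipartite system. -/
def ptrans3 {a b : Type*}
    (M : Matrix (((a × b) × (a × b)) × (a × b)) (((a × b) × (a × b)) × (a × b)) ℂ) :
    Matrix (((a × b) × (a × b)) × (a × b)) (((a × b) × (a × b)) × (a × b)) ℂ :=
  fun p q =>
    M (((p.1.1.1, q.1.1.2), (p.1.2.1, q.1.2.2)), (p.2.1, q.2.2))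
      (((q.1.1.1, p.1.1.2), (q.1.2.1, p.1.2.2)), (q.2.1, p.2.2))

/-- The trace norm Tr|H| = Tr √(Hᴴ H). -/
noncomputable def trN {n : Type*} [Fintype n] [DecidableEq n] (H : Matrix n n ℂ) : ℝ :=
  (((Matrix.posSemidef_conjTranspose_mul_self H).1.eigenvectorUnitary : Matrix n n ℂ) *
      diagonal (((↑) : ℝ → ℂ) ∘ (Real.sqrt ∘ (Matrix.posSemidef_conjTranspose_mul_self H).1.eigenvalues)) *
      (star (Matrix.posSemidef_conjTranspose_mul_self H).1.eigenvectorUnitary : Matrix n n ℂ)).trace.re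

set_option linter.unusedSectionVars false
section Aux
open Finset

variable {n : Type*} [Fintype n] [DecidableEq n]

lemma trace_sqrt_eq {A : Matrix n n ℂ} (hA : A.PosSemidef) :
    ((hA.1.eigenvectorUnitary : Matrix n n ℂ) *
      diagonal (((↑) : ℝ → ℂ) ∘ (Real.sqrt ∘ hA.1.eigenvalues)) *
      (star hA.1.eigenvectorUnitary : Matrix n n ℂ)).trace
      = ∑ i, (Real.sqrt (hA.1.eigenvalues i) : ℂ) := by
  rw [Matrix.trace_mul_cycle, Unitary.coe_star_mul_self]
  simp [Matrix.trace_diagonal]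

lemma trN_eq (M : Matrix n n ℂ) :
    trN M = ∑ i, Real.sqrt ((Matrix.posSemidef_conjTranspose_mul_self M).1.eigenvalues i) := by
  rw [trN, trace_sqrt_eq (Matrix.posSemidef_conjTranspose_mul_self M)]; simp

lemma trN_nonneg (M : Matrix n n ℂ) : 0 ≤ trN M := by
  rw [trN_eq]
  exact Finset.sum_nonneg fun i _ => Real.sqrt_nonneg _

lemma sum_abs_sq_eq (v : n → ℂ) : ∑ j, ‖v j‖ ^ 2 = (star v ⬝ᵥ v).re := by
  rw [dotProduct, Complex.re_sum]
  congr 1; ext j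
  simp [Complex.sq_norm, Complex.normSq_apply, Complex.mul_re, Complex.star_def]

lemma star_dot_mulVec (A : Matrix n n ℂ) (y : n → ℂ) :
    star (A *ᵥ y) ⬝ᵥ (A *ᵥ y) = star y ⬝ᵥ ((Aᴴ * A) *ᵥ y) := by
  rw [star_mulVec, ← Matrix.mulVec_mulVec, Matrix.dotProduct_mulVec, Matrix.dotProduct_mulVec,
    Matrix.dotProduct_mulVec]

lemma col_sq_sum (M : Matrix n n ℂ) (i k : n) :
    ∑ j, star ((M * (Matrix.posSemidef_conjTranspose_mul_self M).1.eigenvectorUnitary.1) j i) *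
      ((M * (Matrix.posSemidef_conjTranspose_mul_self M).1.eigenvectorUnitary.1) j k) =
    Matrix.diagonal
      (Complex.ofReal ∘ (Matrix.posSemidef_conjTranspose_mul_self M).1.eigenvalues) i k := by
  set hM := (Matrix.posSemidef_conjTranspose_mul_self M).1
  have h := hM.conjStarAlgAut_star_eigenvectorUnitary
  rw [Unitary.conjStarAlgAut_apply, Unitary.coe_star, star_star, Matrix.star_eq_conjTranspose] at h
  simp only [Matrix.mul_assoc] at h
  have h2 : ((M * hM.eigenvectorUnitary.1)ᴴ * (M * hM.eigenvectorUnitary.1)) i k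
      = Matrix.diagonal (Complex.ofReal ∘ hM.eigenvalues) i k := by
    rw [Matrix.conjTranspose_mul, Matrix.mul_assoc, h]
    rfl
  rw [← h2, Matrix.mul_apply]
  exact Finset.sum_congr rfl fun j _ => by rw [Matrix.conjTranspose_apply]

lemma unit_col {U : Matrix n n ℂ} (hU : star U * U = 1) (i : n) :
    ∑ j, ‖U j i‖ ^ 2 = 1 := by
  have h := sum_abs_sq_eq (fun j => U j i)
  have h2 : star (fun j => U j i) ⬝ᵥ (fun j => U j i) = (star U * U) i i := by
    rw [Matrix.mul_apply, dotProduct]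
    exact Finset.sum_congr rfl fun j _ => rfl
  rw [h, h2, hU]
  simp

lemma re_trace_mul_le (M C : Matrix n n ℂ)
    (hC : ∀ x : n → ℂ, ∑ j, ‖(C *ᵥ x) j‖ ^ 2 ≤ ∑ j, ‖x j‖ ^ 2) :
    (Matrix.trace (C * M)).re ≤ trN M := by
  set hM := (Matrix.posSemidef_conjTranspose_mul_self M).1 with hMdef
  set U : Matrix n n ℂ := hM.eigenvectorUnitary.1 with hUdef
  have hU : star U * U = 1 := Matrix.mem_unitaryGroup_iff'.mp hM.eigenvectorUnitary.2
  have hU2 : U * star U = 1 := Matrix.mem_unitaryGroup_iff.mp hM.eigenvectorUnitary.2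
  have htr : Matrix.trace (C * M) = Matrix.trace (star U * (C * M) * U) := by
    rw [Matrix.trace_mul_cycle, ← Matrix.mul_assoc, hU2, Matrix.one_mul]
  rw [htr, Matrix.trace, Complex.re_sum, trN_eq]
  apply Finset.sum_le_sum
  intro i _
  set b : n → ℂ := fun k => (M * U) k i with hbdef
  have hb : ∑ j, ‖b j‖ ^ 2 = hM.eigenvalues i := by
    rw [sum_abs_sq_eq]
    have h2 : star b ⬝ᵥ b = ∑ j, star ((M * U) j i) * ((M * U) j i) :=
      Finset.sum_congr rfl fun j _ => rfl
    rw [h2, col_sq_sum M i i]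
    simp
  have hval : ∀ j, (C * M * U) j i = (C *ᵥ b) j := by
    intro j
    rw [Matrix.mul_assoc, Matrix.mul_apply]
    rfl
  have hentry : (star U * (C * M) * U).diag i = ∑ j, star (U j i) * ((C *ᵥ b) j) := by
    rw [Matrix.diag_apply, Matrix.mul_assoc, Matrix.mul_apply]
    exact Finset.sum_congr rfl fun j _ => by rw [← hval j]; rfl
  rw [hentry]
  calc (∑ j, star (U j i) * ((C *ᵥ b) j)).re
      ≤ ‖∑ j, star (U j i) * ((C *ᵥ b) j)‖ := Complex.re_le_norm _
    _ ≤ ∑ j, ‖star (U j i) * ((C *ᵥ b) j)‖ := norm_sum_le _ _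
    _ = ∑ j, ‖U j i‖ * ‖(C *ᵥ b) j‖ := by
        refine Finset.sum_congr rfl fun j _ => ?_
        rw [norm_mul, RCLike.star_def, Complex.norm_conj]
    _ ≤ Real.sqrt (∑ j, ‖U j i‖ ^ 2) * Real.sqrt (∑ j, ‖(C *ᵥ b) j‖ ^ 2) :=
        Real.sum_mul_le_sqrt_mul_sqrt _ _ _
    _ ≤ 1 * Real.sqrt (hM.eigenvalues i) := by
        rw [unit_col hU, Real.sqrt_one]
        refine mul_le_mul_of_nonneg_left ?_ zero_le_one
        exact Real.sqrt_le_sqrt (hb ▸ hC b)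
    _ = Real.sqrt (hM.eigenvalues i) := one_mul _

lemma exists_attain (M : Matrix n n ℂ) :
    ∃ C : Matrix n n ℂ,
      (∀ x : n → ℂ, ∑ j, ‖(C *ᵥ x) j‖ ^ 2 ≤ ∑ j, ‖x j‖ ^ 2)
      ∧ (Matrix.trace (C * M)).re = trN M := by
  set hM := (Matrix.posSemidef_conjTranspose_mul_self M).1 with hMdef
  set U : Matrix n n ℂ := hM.eigenvectorUnitary.1 with hUdef
  have hU : Uᴴ * U = 1 := Matrix.mem_unitaryGroup_iff'.mp hM.eigenvectorUnitary.2
  have hev : ∀ i, 0 ≤ hM.eigenvalues i :=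
    (Matrix.posSemidef_conjTranspose_mul_self M).eigenvalues_nonneg
  set W : Matrix n n ℂ := fun j i =>
    if 0 < hM.eigenvalues i then (M * U) j i / (Real.sqrt (hM.eigenvalues i) : ℂ) else 0
    with hWdef
  set d : n → ℂ := fun i => if 0 < hM.eigenvalues i then 1 else 0 with hddef
  have hWW : Wᴴ * W = Matrix.diagonal d := by
    ext i k
    rw [Matrix.mul_apply, Matrix.diagonal_apply]
    have e1 : ∀ j, Wᴴ i j * W j k = star (W j i) * W j k := fun j => rfl
    simp_rw [e1]
    by_cases hi : 0 < hM.eigenvalues i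
    · by_cases hk : 0 < hM.eigenvalues k
      · have e2 : ∀ j, star (W j i) * W j k
            = star ((M * U) j i) * ((M * U) j k) /
              ((Real.sqrt (hM.eigenvalues i) : ℂ) * (Real.sqrt (hM.eigenvalues k) : ℂ)) := by
          intro j
          simp only [hWdef, hi, hk, if_true, star_div₀, Complex.conj_ofReal, RCLike.star_def]
          rw [div_mul_div_comm]
        simp_rw [e2]
        rw [← Finset.sum_div, col_sq_sum M i k]
        by_cases hik : i = k
        · subst hik
          simp only [Matrix.diagonal_apply_eq, if_true, Function.comp_apply]
          have : (Real.sqrt (hM.eigenvalues i) : ℂ) * (Real.sqrt (hM.eigenvalues i) : ℂ)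
              = (hM.eigenvalues i : ℂ) := by
            push_cast [← Complex.ofReal_mul]
            rw [Real.mul_self_sqrt (hev i)]
          rw [this, div_self (by exact_mod_cast ne_of_gt hi)]
          simp [hddef, hi]
        · simp [Matrix.diagonal_apply_ne _ hik, hik]
      · have e2 : ∀ j, star (W j i) * W j k = 0 := by
          intro j; simp [hWdef, hk]
        simp_rw [e2]
        have hik : i ≠ k := fun h => hk (h ▸ hi)
        simp [hik]
    · have e2 : ∀ j, star (W j i) * W j k = 0 := by
        intro j; simp [hWdef, hi]
      simp_rw [e2]
      by_cases hik : i = k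
      · subst hik; simp [hddef, hi]
      · simp [hik]
  have hWd : W * Matrix.diagonal d = W := by
    ext j i
    rw [Matrix.mul_diagonal]
    by_cases hi : 0 < hM.eigenvalues i
    · simp [hddef, hi]
    · simp [hWdef, hddef, hi]
  set P : Matrix n n ℂ := W * Wᴴ with hPdef
  have hPherm : Pᴴ = P := by
    rw [hPdef, Matrix.conjTranspose_mul, Matrix.conjTranspose_conjTranspose]
  have hPP : P * P = P := by
    rw [hPdef, Matrix.mul_assoc, ← Matrix.mul_assoc Wᴴ W, hWW, ← Matrix.mul_assoc, hWd]
  have hproj : (1 - P)ᴴ * (1 - P) = 1 - P := by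
    rw [Matrix.conjTranspose_sub, Matrix.conjTranspose_one, hPherm, Matrix.sub_mul,
      Matrix.one_mul, Matrix.mul_sub, Matrix.mul_one, hPP]
    abel
  refine ⟨U * Wᴴ, ?_, ?_⟩
  · intro x
    have hCC : (U * Wᴴ)ᴴ * (U * Wᴴ) = P := by
      rw [Matrix.conjTranspose_mul, Matrix.conjTranspose_conjTranspose, Matrix.mul_assoc,
        ← Matrix.mul_assoc Uᴴ U, hU, Matrix.one_mul, hPdef]
    have h1 : ∑ j, ‖((U * Wᴴ) *ᵥ x) j‖ ^ 2 = (star x ⬝ᵥ (P *ᵥ x)).re := by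
      rw [sum_abs_sq_eq, star_dot_mulVec, hCC]
    have h0 : 0 ≤ (star x ⬝ᵥ ((1 - P) *ᵥ x)).re := by
      have := star_dot_mulVec (1 - P) x
      rw [hproj] at this
      rw [← this, ← sum_abs_sq_eq]
      exact Finset.sum_nonneg fun j _ => sq_nonneg _
    rw [h1, sum_abs_sq_eq]
    rw [Matrix.sub_mulVec, Matrix.one_mulVec, dotProduct_sub, Complex.sub_re] at h0
    linarith
  · have htr : Matrix.trace (U * Wᴴ * M) = Matrix.trace (Wᴴ * (M * U)) := by
      rw [Matrix.trace_mul_cycle, ← Matrix.mul_assoc, Matrix.trace_mul_comm, Matrix.mul_assoc]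
    rw [htr, Matrix.trace]
    have hdiag : ∀ i, (Wᴴ * (M * U)).diag i = (Real.sqrt (hM.eigenvalues i) : ℂ) := by
      intro i
      rw [Matrix.diag_apply, Matrix.mul_apply]
      have e1 : ∀ j, Wᴴ i j * (M * U) j i = star (W j i) * (M * U) j i := fun j => rfl
      simp_rw [e1]
      by_cases hi : 0 < hM.eigenvalues i
      · have e2 : ∀ j, star (W j i) * (M * U) j i
            = star ((M * U) j i) * ((M * U) j i) / (Real.sqrt (hM.eigenvalues i) : ℂ) := by
          intro j
          simp only [hWdef, hi, if_true, star_div₀, Complex.conj_ofReal, RCLike.star_def]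
          rw [div_mul_eq_mul_div]
        simp_rw [e2]
        rw [← Finset.sum_div, col_sq_sum M i i]
        simp only [Matrix.diagonal_apply_eq, Function.comp_apply]
        rw [show (hM.eigenvalues i : ℂ) = (Real.sqrt (hM.eigenvalues i) : ℂ)
            * (Real.sqrt (hM.eigenvalues i) : ℂ) by
          push_cast [← Complex.ofReal_mul]
          rw [Real.mul_self_sqrt (hev i)]]
        rw [mul_div_assoc, div_self (by exact_mod_cast ne_of_gt (Real.sqrt_pos.mpr hi)), mul_one]
      · have hz : hM.eigenvalues i = 0 := le_antisymm (not_lt.mp hi) (hev i)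
        have e2 : ∀ j, star (W j i) * (M * U) j i = 0 := by
          intro j; simp [hWdef, hi]
        simp_rw [e2]
        simp [hz]
    rw [Complex.re_sum]
    rw [trN_eq]
    exact Finset.sum_congr rfl fun i _ => by rw [hdiag i, Complex.ofReal_re]

lemma trN_add_le (A B : Matrix n n ℂ) : trN (A + B) ≤ trN A + trN B := by
  obtain ⟨C, hcon, hval⟩ := exists_attain (A + B)
  have hsplit : Matrix.trace (C * (A + B)) = Matrix.trace (C * A) + Matrix.trace (C * B) := by
    rw [Matrix.mul_add, Matrix.trace_add]
  calc trN (A + B) = (Matrix.trace (C * (A + B))).re := hval.symm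
    _ = (Matrix.trace (C * A)).re + (Matrix.trace (C * B)).re := by rw [hsplit, Complex.add_re]
    _ ≤ trN A + trN B := add_le_add (re_trace_mul_le A C hcon) (re_trace_mul_le B C hcon)

lemma trace_im_zero {X : Matrix n n ℂ} (h : X.IsHermitian) : (Matrix.trace X).im = 0 := by
  have h2 : Matrix.trace Xᴴ = Matrix.trace X := by rw [h]
  rw [Matrix.trace_conjTranspose] at h2
  exact Complex.conj_eq_iff_im.mp h2

end Aux

section Kron

variable {m n : Type*} [Fintype m] [DecidableEq m] [Fintype n] [DecidableEq n]

lemma conjTranspose_kron (A : Matrix m m ℂ) (B : Matrix n n ℂ) : (A ⊗ₖ B)ᴴ = Aᴴ ⊗ₖ Bᴴ := by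
  ext ⟨i, j⟩ ⟨k, l⟩
  simp [Matrix.conjTranspose_apply, Matrix.kroneckerMap_apply, star_mul']

lemma posSemidef_kron {A : Matrix m m ℂ} {B : Matrix n n ℂ}
    (hA : A.PosSemidef) (hB : B.PosSemidef) : (A ⊗ₖ B).PosSemidef := by
  exact hA.kronecker hB

open scoped MatrixOrder in
lemma trN_sqrt {k : Type*} [Fintype k] [DecidableEq k] (M : Matrix k k ℂ) :
    trN M = (CFC.sqrt (Mᴴ * M)).trace.re := by
  rw [CFC.sqrt_eq_real_sqrt _ (Matrix.posSemidef_conjTranspose_mul_self M).nonneg,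
    cfcₙ_eq_cfc, Matrix.IsHermitian.cfc_eq (Matrix.posSemidef_conjTranspose_mul_self M).1,
    Matrix.IsHermitian.cfc, Unitary.conjStarAlgAut_apply]
  rfl

open scoped MatrixOrder in
lemma trN_kron (A : Matrix m m ℂ) (B : Matrix n n ℂ) : trN (A ⊗ₖ B) = trN A * trN B := by
  set hA := Matrix.posSemidef_conjTranspose_mul_self A
  set hB := Matrix.posSemidef_conjTranspose_mul_self B
  have h1 : (CFC.sqrt (Aᴴ * A) ⊗ₖ CFC.sqrt (Bᴴ * B)).PosSemidef :=
    posSemidef_kron (CFC.sqrt_nonneg (Aᴴ * A)).posSemidef (CFC.sqrt_nonneg (Bᴴ * B)).posSemidef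
  have h2 : (CFC.sqrt (Aᴴ * A) ⊗ₖ CFC.sqrt (Bᴴ * B)) ^ 2 = (A ⊗ₖ B)ᴴ * (A ⊗ₖ B) := by
    rw [pow_two, ← Matrix.mul_kronecker_mul, ← pow_two, ← pow_two, CFC.sq_sqrt _ hA.nonneg,
      CFC.sq_sqrt _ hB.nonneg, conjTranspose_kron, Matrix.mul_kronecker_mul]
  have h3 : CFC.sqrt ((A ⊗ₖ B)ᴴ * (A ⊗ₖ B)) = CFC.sqrt (Aᴴ * A) ⊗ₖ CFC.sqrt (Bᴴ * B) := by
    rw [← h2, CFC.sqrt_sq _ h1.nonneg]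
  rw [trN_sqrt, trN_sqrt, trN_sqrt, h3, Matrix.trace_kronecker, Complex.mul_re,
    trace_im_zero (CFC.sqrt_nonneg (Aᴴ * A)).posSemidef.1,
    trace_im_zero (CFC.sqrt_nonneg (Bᴴ * B)).posSemidef.1]
  ring

end Kron

section Ptrans

variable {a b : Type*}

lemma ptrans_ptrans (M : Matrix (a × b) (a × b) ℂ) : ptrans (ptrans M) = M := by
  ext ⟨p1, p2⟩ ⟨q1, q2⟩; rfl

lemma ptrans3_add (A B : Matrix (((a × b) × (a × b)) × (a × b)) (((a × b) × (a × b)) × (a × b)) ℂ) :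
    ptrans3 (A + B) = ptrans3 A + ptrans3 B := rfl

lemma ptrans3_kron (X Y Z : Matrix (a × b) (a × b) ℂ) :
    ptrans3 ((X ⊗ₖ Y) ⊗ₖ Z) = (ptrans X ⊗ₖ ptrans Y) ⊗ₖ ptrans Z := by
  ext ⟨⟨⟨x1, x2⟩, ⟨y1, y2⟩⟩, ⟨z1, z2⟩⟩ ⟨⟨⟨u1, u2⟩, ⟨v1, v2⟩⟩, ⟨w1, w2⟩⟩; rfl

end Ptrans

theorem tripling_bound {a b : Type*} [Fintype a] [Fintype b] [DecidableEq a] [DecidableEq b]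
    (Λ H : Matrix (a × b) (a × b) ℂ)
    (hΛ : Λ.IsHermitian) (hH : H.IsHermitian)
    (hΛpt : ptrans Λ = Λ) (hΛtn : trN Λ ≤ 1)
    (hHΛ : H + ptrans H = Λ) (hHtn : trN H + trN (ptrans H) ≤ 1)
    (H' : Matrix (((a × b) × (a × b)) × (a × b)) (((a × b) × (a × b)) × (a × b)) ℂ)
    (hH' : H' = (H ⊗ₖ H) ⊗ₖ H + (ptrans H ⊗ₖ H) ⊗ₖ H
        + (H ⊗ₖ ptrans H) ⊗ₖ H + (H ⊗ₖ H) ⊗ₖ ptrans H)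
    (f : ℝ → ℝ) (hf : ∀ x, f x = x ^ 2 * (3 - 2 * x)) :
    H' + ptrans3 H' = (Λ ⊗ₖ Λ) ⊗ₖ Λ ∧ trN H' ≤ f (trN H) ∧
      trN (ptrans3 H') ≤ f (trN (ptrans H)) ∧ trN H' + trN (ptrans3 H') ≤ 1 := by
  set G := ptrans H with hG
  have hpt3 : ptrans3 H' = (G ⊗ₖ G) ⊗ₖ G + (H ⊗ₖ G) ⊗ₖ G + (G ⊗ₖ H) ⊗ₖ G + (G ⊗ₖ G) ⊗ₖ H := by
    rw [hH', ptrans3_add, ptrans3_add, ptrans3_add, ptrans3_kron, ptrans3_kron, ptrans3_kron,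
      ptrans3_kron, ptrans_ptrans]
  set x := trN H with hx
  set y := trN G with hy
  have hx0 : 0 ≤ x := trN_nonneg H
  have hy0 : 0 ≤ y := trN_nonneg G
  have hxy : x + y ≤ 1 := hHtn
  have hH'bound : trN H' ≤ x * x * x + y * x * x + x * y * x + x * x * y := by
    rw [hH']
    refine le_trans (trN_add_le _ _) (add_le_add (le_trans (trN_add_le _ _)
      (add_le_add (le_trans (trN_add_le _ _) (add_le_add ?_ ?_)) ?_)) ?_) <;>
      rw [trN_kron, trN_kron] <;> exact le_refl _
  have hG'bound : trN (ptrans3 H') ≤ y * y * y + x * y * y + y * x * y + y * y * x := by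
    rw [hpt3]
    refine le_trans (trN_add_le _ _) (add_le_add (le_trans (trN_add_le _ _)
      (add_le_add (le_trans (trN_add_le _ _) (add_le_add ?_ ?_)) ?_)) ?_) <;>
      rw [trN_kron, trN_kron] <;> exact le_refl _
  refine ⟨?_, ?_, ?_, ?_⟩
  · rw [hpt3, hH', ← hHΛ]
    simp only [Matrix.add_kronecker, Matrix.kronecker_add]
    abel
  · rw [hf]
    nlinarith [sq_nonneg x, mul_nonneg (mul_nonneg hx0 hx0) hy0]
  · rw [hf]
    nlinarith [sq_nonneg y, mul_nonneg (mul_nonneg hy0 hy0) hx0]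
  · have h1 : trN H' ≤ f x := by
      rw [hf]; nlinarith [mul_nonneg (mul_nonneg hx0 hx0) hy0]
    have h2 : trN (ptrans3 H') ≤ f y := by
      rw [hf]; nlinarith [mul_nonneg (mul_nonneg hy0 hy0) hx0]
    have h3 : f x + f y ≤ 1 := by
      rw [hf, hf]
      nlinarith [mul_nonneg hx0 hy0, sq_nonneg (x - y), sq_nonneg (x + y - 1),
        mul_nonneg (mul_nonneg hx0 hy0) (sub_nonneg.mpr hxy)]
    linarith
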